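/- arXiv:2005.14105 — 5 statements merged into one kernel-verified Lean document; each statement's English description precedes it below -/
import Mathlib

section
/- Let p ∈ ℕ, p' ∈ ℕ with 1 ≤ p' ≤ p*, s ∈ (0,1], and v : ℤ → (0,2]. Define S = ∑_{k=1}^{p-1} max(0, v(p-k) - max(0,2(p'-k)) - max(0,2(k-p'))). Then S = v(p - p') if p' < p, and S = 0 if p' ≥ p. -/
theorem gated_sum (pstar : ℕ) (p p' : ℕ) (hp' : 1 ≤ p' ∧ p' ≤ pstar)
    (s : ℝ) (hs : 0 < s ∧ s ≤ 1)
    (v : ℤ → ℝ) (hv : ∀ q : ℤ, 0 < v q ∧ v q ≤ 2) :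
    (p' < p →
      (∑ k ∈ Finset.Icc 1 (p - 1),
        max 0 (v ((p : ℤ) - k) - max 0 (2 * ((p' : ℝ) - k)) - max 0 (2 * ((k : ℝ) - p'))))
        = v ((p : ℤ) - p')) ∧
    (p ≤ p' →
      (∑ k ∈ Finset.Icc 1 (p - 1),
        max 0 (v ((p : ℤ) - k) - max 0 (2 * ((p' : ℝ) - k)) - max 0 (2 * ((k : ℝ) - p'))))
        = 0) := by
  have hterm : ∀ k : ℕ, k ≠ p' →
      max 0 (v ((p : ℤ) - k) - max 0 (2 * ((p' : ℝ) - k)) - max 0 (2 * ((k : ℝ) - p'))) = 0 := by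
    intro k hk
    have hv2 := (hv ((p : ℤ) - k)).2
    rcases lt_or_gt_of_ne hk with h | h
    · have h1 : (2 : ℝ) ≤ 2 * ((p' : ℝ) - k) := by
        have : (k : ℝ) + 1 ≤ p' := by exact_mod_cast h
        linarith
      have h2 : (0 : ℝ) ≤ max 0 (2 * ((k : ℝ) - p')) := le_max_left _ _
      have h3 : (2 : ℝ) ≤ max 0 (2 * ((p' : ℝ) - k)) := le_trans h1 (le_max_right _ _)
      exact max_eq_left (by linarith)
    · have h1 : (2 : ℝ) ≤ 2 * ((k : ℝ) - p') := by
        have : (p' : ℝ) + 1 ≤ k := by exact_mod_cast h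
        linarith
      have h2 : (0 : ℝ) ≤ max 0 (2 * ((p' : ℝ) - k)) := le_max_left _ _
      have h3 : (2 : ℝ) ≤ max 0 (2 * ((k : ℝ) - p')) := le_trans h1 (le_max_right _ _)
      exact max_eq_left (by linarith)
  constructor
  · intro hlt
    rw [Finset.sum_eq_single p' (fun k _ hk => hterm k hk)
      (fun h => absurd (Finset.mem_Icc.mpr ⟨hp'.1, Nat.le_sub_one_of_lt hlt⟩) h)]
    have : max 0 (2 * ((p' : ℝ) - p')) = 0 := by simp
    rw [this]
    have := (hv ((p : ℤ) - p')).1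
    rw [sub_zero, sub_zero, max_eq_right (le_of_lt this)]
  · intro hle
    apply Finset.sum_eq_zero
    intro k hk
    have := Finset.mem_Icc.mp hk
    exact hterm k (by omega)
end

section
/- Let P ∈ ℕ, let d_old and d_new be positive integer multiples of 1/P, and let p ∈ [P]. For k ∈ ℕ define A(k) = max(0, 2P(p·d_new - k·d_old)) and B(k) = max(0, 2P((k-1)·d_old - p·d_new) + 2). Then A(k) + B(k) = 0 if and only if k is the smallest integer with k·d_old ≥ p·d_new; otherwise A(k) + B(k) ≥ 2. -/
lemma fptas_aux_max (x y : ℝ) : max 0 x + max 0 y = 0 ↔ x ≤ 0 ∧ y ≤ 0 := by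
  constructor
  · intro h
    have hx := le_max_left (0:ℝ) x
    have hy := le_max_left (0:ℝ) y
    have hx0 : max 0 x = 0 := by linarith
    have hy0 : max 0 y = 0 := by linarith
    exact ⟨max_eq_left_iff.mp hx0, max_eq_left_iff.mp hy0⟩
  · rintro ⟨hx, hy⟩
    rw [max_eq_left hx, max_eq_left hy, add_zero]

theorem fptas_selection_gadget (P : ℕ) (hP : 1 ≤ P)
    (a b : ℕ) (ha : 1 ≤ a) (hb : 1 ≤ b)
    (dold dnew : ℝ) (hdold : dold = (a : ℝ) / P) (hdnew : dnew = (b : ℝ) / P)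
    (p : ℕ) (hp : 1 ≤ p ∧ p ≤ P) (k : ℕ) (hk : 1 ≤ k) :
    (max 0 (2 * P * ((p : ℝ) * dnew - k * dold)) +
        max 0 (2 * P * (((k : ℝ) - 1) * dold - p * dnew) + 2) = 0 ↔
      ((p : ℝ) * dnew ≤ k * dold ∧ ∀ k' : ℕ, (p : ℝ) * dnew ≤ k' * dold → k ≤ k')) ∧
    (¬((p : ℝ) * dnew ≤ k * dold ∧ ∀ k' : ℕ, (p : ℝ) * dnew ≤ k' * dold → k ≤ k') →
      2 ≤ max 0 (2 * P * ((p : ℝ) * dnew - k * dold)) +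
        max 0 (2 * P * (((k : ℝ) - 1) * dold - p * dnew) + 2)) := by
  have hPpos : (0:ℝ) < P := by exact_mod_cast hP
  have hPne : (P:ℝ) ≠ 0 := ne_of_gt hPpos
  subst hdold hdnew
  have e1 : 2 * (P:ℝ) * ((p : ℝ) * ((b:ℝ)/P) - (k:ℝ) * ((a:ℝ)/P))
      = 2*(p:ℝ)*b - 2*k*a := by field_simp
  have e2 : 2 * (P:ℝ) * (((k : ℝ) - 1) * ((a:ℝ)/P) - (p:ℝ) * ((b:ℝ)/P)) + 2
      = 2*(k:ℝ)*a - 2*a - 2*p*b + 2 := by field_simp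
  rw [e1, e2]
  have hcond : ∀ k' : ℕ, ((p : ℝ) * ((b:ℝ)/P) ≤ (k':ℝ) * ((a:ℝ)/P)) ↔ p*b ≤ k'*a := by
    intro k'
    rw [← mul_div_assoc, ← mul_div_assoc, div_le_div_iff_of_pos_right hPpos]
    exact_mod_cast Iff.rfl
  have hmn1 : (2*(p:ℝ)*b - 2*k*a ≤ 0) ↔ p*b ≤ k*a := by
    constructor
    · intro h; have : (p:ℝ)*b ≤ (k:ℝ)*a := by linarith
      exact_mod_cast this
    · intro h; have : (p:ℝ)*b ≤ (k:ℝ)*a := by exact_mod_cast h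
      linarith
  have hmn2 : (2*(k:ℝ)*a - 2*a - 2*p*b + 2 ≤ 0) ↔ k*a + 1 ≤ a + p*b := by
    constructor
    · intro h; have : (k:ℝ)*a + 1 ≤ (a:ℝ) + p*b := by linarith
      exact_mod_cast this
    · intro h; have : (k:ℝ)*a + 1 ≤ (a:ℝ) + p*b := by exact_mod_cast h
      linarith
  have heq : a + (k-1)*a = k*a := by nlinarith [Nat.sub_add_cancel hk]
  have hminiff : (p*b ≤ k*a ∧ k*a + 1 ≤ a + p*b) ↔
      (p*b ≤ k*a ∧ ∀ k' : ℕ, p*b ≤ k'*a → k ≤ k') := by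
    constructor
    · rintro ⟨h1, h2⟩
      refine ⟨h1, fun k' hk' => ?_⟩
      by_contra hlt
      push_neg at hlt
      have hk'le : k' ≤ k - 1 := by omega
      have : k'*a ≤ (k-1)*a := Nat.mul_le_mul_right a hk'le
      omega
    · rintro ⟨h1, h2⟩
      refine ⟨h1, ?_⟩
      by_contra hle
      push_neg at hle
      have hm : p*b ≤ (k-1)*a := by omega
      have := h2 (k-1) hm
      omega
  constructor
  · rw [fptas_aux_max, hmn1, hmn2, hminiff]
    constructor
    · rintro ⟨h1, h2⟩
      exact ⟨(hcond k).mpr h1, fun k' hk' => h2 k' ((hcond k').mp hk')⟩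
    · rintro ⟨h1, h2⟩
      exact ⟨(hcond k).mp h1, fun k' hk' => h2 k' ((hcond k').mpr hk')⟩
  · intro hnot
    have hnot' : ¬(p*b ≤ k*a ∧ k*a + 1 ≤ a + p*b) := by
      rw [hminiff]
      intro ⟨h1, h2⟩
      exact hnot ⟨(hcond k).mpr h1, fun k' hk' => h2 k' ((hcond k').mp hk')⟩
    by_cases hc : p*b ≤ k*a
    · have h2 : a + p*b ≤ k*a := by omega
      have h2' : (a:ℝ) + p*b ≤ (k:ℝ)*a := by exact_mod_cast h2
      have : (2:ℝ) ≤ 2*(k:ℝ)*a - 2*a - 2*p*b + 2 := by linarith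
      have := le_trans this (le_max_right (0:ℝ) _)
      have hnn := le_max_left (0:ℝ) (2*(p:ℝ)*b - 2*k*a)
      linarith
    · push_neg at hc
      have h1 : k*a + 1 ≤ p*b := hc
      have h1' : (k:ℝ)*a + 1 ≤ (p:ℝ)*b := by exact_mod_cast h1
      have : (2:ℝ) ≤ 2*(p:ℝ)*b - 2*k*a := by linarith
      have := le_trans this (le_max_right (0:ℝ) _)
      have hnn := le_max_left (0:ℝ) (2*(k:ℝ)*a - 2*a - 2*p*b + 2)
      linarith
end

section
/- Suppose the FPTAS-NN values g(p,i) for p ∈ [P], i ∈ {0,1,...,n}, are defined by g(p,0) = 2 and the recursion g(p,i) = min(h₁(p,i), s_i + h₂(p,i)), where h₁(p,i) = g(p⁽¹⁾, i-1) if the smallest integer p⁽¹⁾ with p⁽¹⁾d_{i-1} ≥ p·d_i satisfies p⁽¹⁾ ≤ P and h₁(p,i) = 2 otherwise, and h₂(p,i) = g(p⁽²⁾, i-1) if the smallest integer p⁽²⁾ with p⁽²⁾d_{i-1} + p_i ≥ p·d_i satisfies p⁽²⁾ ≥ 1 and h₂(p,i) = 0 otherwise; here d_i = max(1, (∑_{j≤i}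 p_j)/P). Then for every i ∈ [n] and p ∈ [P] with g(p,i) < 2, there exists a subset M ⊆ [i] with total profit ∑_{j∈M} p_j ≥ p·d_i and total size ∑_{j∈M} s_j ≤ g(p,i). -/
/-- The rounding granularity `d_i = max(1, (∑_{j ≤ i} p_j) / P)` of the FPTAS-NN. -/
noncomputable def granularity (P : ℕ) (pr : ℕ → ℕ) (i : ℕ) : ℝ :=
  max 1 ((∑ j ∈ Finset.Icc 1 i, (pr j : ℝ)) / P)

lemma granularity_one_le (P : ℕ) (pr : ℕ → ℕ) (i : ℕ) : 1 ≤ granularity P pr i :=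
  le_max_left _ _

lemma granularity_mono (P : ℕ) (pr : ℕ → ℕ) (m : ℕ) :
    granularity P pr m ≤ granularity P pr (m + 1) := by
  apply max_le_max le_rfl
  gcongr
  exact Nat.le_succ m

lemma granularity_step (P : ℕ) (pr : ℕ → ℕ) (m : ℕ) :
    granularity P pr (m + 1) ≤ granularity P pr m + (pr (m + 1) : ℝ) / P := by
  apply max_le
  · exact le_add_of_nonneg_right (by positivity) |>.trans
      (add_le_add_left (granularity_one_le P pr m) _)
  · rw [Finset.sum_Icc_succ_top (Nat.le_add_left 1 m), add_div]
    exact add_le_add_left (le_max_right _ _) _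

lemma isLeast_ceil (c d : ℝ) (hd : 0 < d) :
    IsLeast {k : ℤ | c ≤ (k : ℝ) * d} ⌈c / d⌉ := by
  constructor
  · show c ≤ (⌈c / d⌉ : ℝ) * d
    rw [← div_le_iff₀ hd]
    exact Int.le_ceil _
  · intro k hk
    rw [Set.mem_setOf_eq, ← div_le_iff₀ hd] at hk
    exact Int.ceil_le.mpr hk

theorem fptas_nn_feasibility (n P : ℕ) (hP : 1 ≤ P)
    (pr : ℕ → ℕ) (hpr : ∀ j, 1 ≤ pr j)
    (s : ℕ → ℝ) (hs : ∀ j, 0 < s j ∧ s j ≤ 1)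
    (g : ℕ → ℕ → ℝ)
    (hg0 : ∀ p ∈ Finset.Icc 1 P, g p 0 = 2)
    (hgrec : ∀ i ∈ Finset.Icc 1 n, ∀ p ∈ Finset.Icc 1 P, ∀ k1 k2 : ℤ,
      IsLeast {k : ℤ | (p : ℝ) * granularity P pr i ≤ (k : ℝ) * granularity P pr (i - 1)} k1 →
      IsLeast {k : ℤ | (p : ℝ) * granularity P pr i ≤
        (k : ℝ) * granularity P pr (i - 1) + (pr i : ℝ)} k2 →
      g p i = min (if k1 ≤ (P : ℤ) then g k1.toNat (i - 1) else 2)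
        (s i + if 1 ≤ k2 then g k2.toNat (i - 1) else 0)) :
    ∀ i ∈ Finset.Icc 1 n, ∀ p ∈ Finset.Icc 1 P, g p i < 2 →
      ∃ M : Finset ℕ, M ⊆ Finset.Icc 1 i ∧
        (p : ℝ) * granularity P pr i ≤ (∑ j ∈ M, (pr j : ℝ)) ∧
        (∑ j ∈ M, s j) ≤ g p i := by
  intro i
  induction i using Nat.strong_induction_on with
  | _ i IH =>
  intro hi p hp hlt
  obtain ⟨hi1, hin⟩ := Finset.mem_Icc.mp hi
  obtain ⟨hp1, hpP⟩ := Finset.mem_Icc.mp hp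
  obtain ⟨m, rfl⟩ : ∃ m, i = m + 1 := ⟨i - 1, by omega⟩
  have hdm_pos : (0:ℝ) < granularity P pr m :=
    lt_of_lt_of_le one_pos (granularity_one_le P pr m)
  have hdm1 : (1:ℝ) ≤ granularity P pr m := granularity_one_le P pr m
  have hmono : granularity P pr m ≤ granularity P pr (m + 1) := granularity_mono P pr m
  set dm := granularity P pr m with hdm
  set di := granularity P pr (m + 1) with hdi
  set k1 : ℤ := ⌈(p : ℝ) * di / dm⌉ with hk1
  set k2 : ℤ := ⌈((p : ℝ) * di - (pr (m + 1) : ℝ)) / dm⌉ with hk2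
  have hL1 : IsLeast {k : ℤ | (p : ℝ) * di ≤ (k : ℝ) * dm} k1 := isLeast_ceil _ _ hdm_pos
  have hL2' : IsLeast {k : ℤ | (p : ℝ) * di - (pr (m + 1) : ℝ) ≤ (k : ℝ) * dm} k2 :=
    isLeast_ceil _ _ hdm_pos
  have hL2 : IsLeast {k : ℤ | (p : ℝ) * di ≤ (k : ℝ) * dm + (pr (m + 1) : ℝ)} k2 := by
    constructor
    · have h := hL2'.1
      simp only [Set.mem_setOf_eq] at h ⊢
      linarith
    · intro k hk
      apply hL2'.2
      simp only [Set.mem_setOf_eq] at hk ⊢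
      linarith
  have hrec := hgrec (m + 1) hi p hp k1 k2 hL1 hL2
  simp only [Nat.add_sub_cancel] at hrec
  have hpd : (1:ℝ) * dm ≤ (p : ℝ) * di := by
    have : (1:ℝ) ≤ (p : ℝ) := by exact_mod_cast hp1
    nlinarith
  rcases min_cases (if k1 ≤ (P : ℤ) then g k1.toNat m else 2)
      (s (m + 1) + if 1 ≤ k2 then g k2.toNat m else 0) with ⟨hmin, _⟩ | ⟨hmin, _⟩
  · -- first branch achieves the minimum
    rw [hrec, hmin] at hlt ⊢
    by_cases hk1P : k1 ≤ (P : ℤ)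
    · rw [if_pos hk1P] at hlt ⊢
      have hk1ge : 1 ≤ k1 := by
        have h1 := hL1.1
        simp only [Set.mem_setOf_eq] at h1
        by_contra h
        push_neg at h
        have : (k1 : ℝ) ≤ 0 := by exact_mod_cast (by omega : k1 ≤ (0:ℤ))
        nlinarith
      have hmem : k1.toNat ∈ Finset.Icc 1 P := Finset.mem_Icc.mpr (by omega)
      have hm1 : 1 ≤ m := by
        by_contra h
        push_neg at h
        interval_cases m
        rw [hg0 k1.toNat hmem] at hlt
        linarith
      obtain ⟨M, hMsub, hMpr, hMs⟩ := IH m (by omega) (Finset.mem_Icc.mpr ⟨hm1, by omega⟩)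
        k1.toNat hmem hlt
      refine ⟨M, hMsub.trans (Finset.Icc_subset_Icc le_rfl (Nat.le_succ m)), ?_, hMs⟩
      refine le_trans ?_ hMpr
      have h1 := hL1.1
      simp only [Set.mem_setOf_eq] at h1
      rwa [show ((k1.toNat : ℕ) : ℝ) = (k1 : ℝ) by
        exact_mod_cast congrArg Int.cast (Int.toNat_of_nonneg (by omega))]
    · rw [if_neg hk1P] at hlt
      linarith
  · -- second branch achieves the minimum
    rw [hrec, hmin] at hlt ⊢
    by_cases hk2ge : 1 ≤ k2
    · rw [if_pos hk2ge] at hlt ⊢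
      have hspos := (hs (m + 1)).1
      have hlt' : g k2.toNat m < 2 := by linarith
      have hk2P : k2 ≤ (P : ℤ) := by
        apply hL2.2
        simp only [Set.mem_setOf_eq]
        push_cast
        have hstep : di ≤ dm + (pr (m + 1) : ℝ) / P := granularity_step P pr m
        have hPpos : (0:ℝ) < (P : ℝ) := by exact_mod_cast hP
        have hpP' : (p : ℝ) ≤ (P : ℝ) := by exact_mod_cast hpP
        have hdi_pos : (0:ℝ) < di := lt_of_lt_of_le hdm_pos hmono
        have h1 : (p : ℝ) * di ≤ (P : ℝ) * di := by nlinarith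
        have h2 : (P : ℝ) * di ≤ (P : ℝ) * dm + (pr (m + 1) : ℝ) := by
          have := mul_le_mul_of_nonneg_left hstep (le_of_lt hPpos)
          rwa [mul_add, mul_div_cancel₀ _ (ne_of_gt hPpos)] at this
        linarith
      have hmem : k2.toNat ∈ Finset.Icc 1 P := Finset.mem_Icc.mpr (by omega)
      have hm1 : 1 ≤ m := by
        by_contra h
        push_neg at h
        interval_cases m
        rw [hg0 k2.toNat hmem] at hlt'
        linarith
      obtain ⟨M, hMsub, hMpr, hMs⟩ := IH m (by omega) (Finset.mem_Icc.mpr ⟨hm1, by omega⟩)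
        k2.toNat hmem hlt'
      have hnotmem : m + 1 ∉ M := fun h => by
        have := Finset.mem_Icc.mp (hMsub h); omega
      refine ⟨insert (m + 1) M, ?_, ?_, ?_⟩
      · intro x hx
        rcases Finset.mem_insert.mp hx with rfl | hx
        · exact Finset.mem_Icc.mpr ⟨by omega, le_rfl⟩
        · exact Finset.Icc_subset_Icc le_rfl (Nat.le_succ m) (hMsub hx)
      · rw [Finset.sum_insert hnotmem]
        have h2 := hL2.1
        simp only [Set.mem_setOf_eq] at h2
        have hcast : ((k2.toNat : ℕ) : ℝ) = (k2 : ℝ) := by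
          exact_mod_cast congrArg Int.cast (Int.toNat_of_nonneg (by omega))
        rw [hcast] at hMpr
        linarith
      · rw [Finset.sum_insert hnotmem]
        linarith
    · rw [if_neg hk2ge] at hlt ⊢
      push_neg at hk2ge
      refine ⟨{m + 1}, ?_, ?_, ?_⟩
      · intro x hx
        rw [Finset.mem_singleton] at hx
        exact hx ▸ Finset.mem_Icc.mpr ⟨by omega, le_rfl⟩
      · rw [Finset.sum_singleton]
        have h2 := hL2.1
        simp only [Set.mem_setOf_eq] at h2
        have : (k2 : ℝ) * dm ≤ 0 := by
          have hk2le : (k2 : ℝ) ≤ 0 := by exact_mod_cast (by omega : k2 ≤ (0:ℤ))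
          nlinarith
        linarith
      · rw [Finset.sum_singleton]
        linarith
end

section
/- Under the FPTAS-NN recursion (as in the feasibility theorem), let M^OPT be an optimal Knapsack solution with profit p^OPT, and for i ∈ [n] let p^OPT_i and s^OPT_i be the profit and size of M^OPT ∩ [i]. Then for every i ∈ [n] and every integer p with 1 ≤ p ≤ ⌈p^OPT_i / d_i⌉ - i, it holds that g(p,i) ≤ s^OPT_i. -/
private lemma isLeast_mul_aux (a c : ℝ) (hc : 0 < c) :
    IsLeast {k : ℤ | a ≤ (k : ℝ) * c} ⌈a / c⌉ := by
  constructor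
  · have h1 : a / c ≤ (⌈a / c⌉ : ℝ) := Int.le_ceil _
    have := (div_le_iff₀ hc).mp h1
    simpa using this
  · intro k hk
    exact Int.ceil_le.mpr ((div_le_iff₀ hc).mpr hk)

private lemma isLeast_shift_aux (a b c : ℝ) (hc : 0 < c) :
    IsLeast {k : ℤ | a ≤ (k : ℝ) * c + b} ⌈(a - b) / c⌉ := by
  constructor
  · have h1 : (a - b) / c ≤ (⌈(a - b) / c⌉ : ℝ) := Int.le_ceil _
    have := (div_le_iff₀ hc).mp h1
    simp only [Set.mem_setOf_eq]
    linarith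
  · intro k hk
    simp only [Set.mem_setOf_eq] at hk
    exact Int.ceil_le.mpr ((div_le_iff₀ hc).mpr (by linarith))

theorem fptas_nn_invariant (n P : ℕ) (hP : 1 ≤ P)
    (pr : ℕ → ℕ) (hpr : ∀ j, 1 ≤ pr j)
    (s : ℕ → ℝ) (hs : ∀ j, 0 < s j ∧ s j ≤ 1)
    (g : ℕ → ℕ → ℝ)
    (hg0 : ∀ p ∈ Finset.Icc 1 P, g p 0 = 2)
    (hgrec : ∀ i ∈ Finset.Icc 1 n, ∀ p ∈ Finset.Icc 1 P, ∀ k1 k2 : ℤ,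
      IsLeast {k : ℤ | (p : ℝ) * granularity P pr i ≤ (k : ℝ) * granularity P pr (i - 1)} k1 →
      IsLeast {k : ℤ | (p : ℝ) * granularity P pr i ≤
        (k : ℝ) * granularity P pr (i - 1) + (pr i : ℝ)} k2 →
      g p i = min (if k1 ≤ (P : ℤ) then g k1.toNat (i - 1) else 2)
        (s i + if 1 ≤ k2 then g k2.toNat (i - 1) else 0))
    (MOPT : Finset ℕ) (hMsub : MOPT ⊆ Finset.Icc 1 n)
    (hMfeas : (∑ j ∈ MOPT, s j) ≤ 1)
    (hMopt : ∀ M : Finset ℕ, M ⊆ Finset.Icc 1 n → (∑ j ∈ M, s j) ≤ 1 →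
      (∑ j ∈ M, (pr j : ℝ)) ≤ ∑ j ∈ MOPT, (pr j : ℝ)) :
    ∀ i ∈ Finset.Icc 1 n, ∀ p : ℕ, 1 ≤ p →
      (p : ℤ) ≤ ⌈(∑ j ∈ MOPT ∩ Finset.Icc 1 i, (pr j : ℝ)) / granularity P pr i⌉ - (i : ℤ) →
      g p i ≤ ∑ j ∈ MOPT ∩ Finset.Icc 1 i, s j := by
  have hPpos : (0 : ℝ) < P := by exact_mod_cast hP
  have hd1 : ∀ i, (1 : ℝ) ≤ granularity P pr i := fun i => le_max_left _ _
  have hdpos : ∀ i, (0 : ℝ) < granularity P pr i := fun i => lt_of_lt_of_le one_pos (hd1 i)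
  have hdmono : ∀ i, granularity P pr i ≤ granularity P pr (i + 1) := by
    intro i
    apply max_le_max le_rfl
    have hsub : (∑ j ∈ Finset.Icc 1 i, (pr j : ℝ)) ≤ ∑ j ∈ Finset.Icc 1 (i+1), (pr j : ℝ) :=
      Finset.sum_le_sum_of_subset_of_nonneg (Finset.Icc_subset_Icc_right (by omega))
        (by intro j _ _; positivity)
    gcongr
  have hsum_le : ∀ i, (∑ j ∈ MOPT ∩ Finset.Icc 1 i, (pr j : ℝ)) ≤ P * granularity P pr i := by
    intro i
    have h1 : (∑ j ∈ MOPT ∩ Finset.Icc 1 i, (pr j : ℝ)) ≤ ∑ j ∈ Finset.Icc 1 i, (pr j : ℝ) :=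
      Finset.sum_le_sum_of_subset_of_nonneg Finset.inter_subset_right
        (by intro j _ _; positivity)
    have h2 : (∑ j ∈ Finset.Icc 1 i, (pr j : ℝ)) / P ≤ granularity P pr i := le_max_right _ _
    have h3 := (div_le_iff₀ hPpos).mp h2
    linarith [h3]
  have hspos : ∀ i, 0 ≤ ∑ j ∈ MOPT ∩ Finset.Icc 1 i, s j := by
    intro i
    apply Finset.sum_nonneg
    intro j _
    exact (hs j).1.le
  intro i
  induction i with
  | zero => intro h; simp at h
  | succ i ih =>
    intro hi p hp1 hple
    have hin : i + 1 ≤ n := (Finset.mem_Icc.mp hi).2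
    -- abbreviations (as plain terms)
    have hceilQ : ⌈(∑ j ∈ MOPT ∩ Finset.Icc 1 (i+1), (pr j : ℝ)) / granularity P pr (i+1)⌉
        ≤ (P : ℤ) := by
      apply Int.ceil_le.mpr
      rw [div_le_iff₀ (hdpos (i+1))]
      push_cast
      exact hsum_le (i+1)
    have hpP : p ≤ P := by
      have : (p : ℤ) ≤ (P : ℤ) - (i + 1 : ℤ) := by omega
      omega
    have hpIcc : p ∈ Finset.Icc 1 P := Finset.mem_Icc.mpr ⟨hp1, hpP⟩
    have hkey : ((p : ℝ) + i) * granularity P pr (i+1)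
        < ∑ j ∈ MOPT ∩ Finset.Icc 1 (i+1), (pr j : ℝ) := by
      have h1 : ((p : ℤ) + i) < ⌈(∑ j ∈ MOPT ∩ Finset.Icc 1 (i+1), (pr j : ℝ)) /
          granularity P pr (i+1)⌉ := by omega
      have h2 := Int.lt_ceil.mp h1
      push_cast at h2
      have := (lt_div_iff₀ (hdpos (i+1))).mp h2
      linarith
    -- least elements
    have hL1 : IsLeast {k : ℤ | (p : ℝ) * granularity P pr (i+1) ≤
        (k : ℝ) * granularity P pr (i+1-1)}
        ⌈((p : ℝ) * granularity P pr (i+1)) / granularity P pr i⌉ := by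
      simpa using isLeast_mul_aux ((p : ℝ) * granularity P pr (i+1)) (granularity P pr i) (hdpos i)
    have hL2 : IsLeast {k : ℤ | (p : ℝ) * granularity P pr (i+1) ≤
        (k : ℝ) * granularity P pr (i+1-1) + (pr (i+1) : ℝ)}
        ⌈((p : ℝ) * granularity P pr (i+1) - (pr (i+1) : ℝ)) / granularity P pr i⌉ := by
      simpa using isLeast_shift_aux ((p : ℝ) * granularity P pr (i+1)) ((pr (i+1) : ℝ))
        (granularity P pr i) (hdpos i)
    have heq := hgrec (i+1) hi p hpIcc _ _ hL1 hL2
    simp only [Nat.add_sub_cancel] at heq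
    rw [heq]
    by_cases hmem : (i+1) ∈ MOPT
    · -- item i+1 is in the optimal solution: use the second branch
      have hsplit : MOPT ∩ Finset.Icc 1 (i+1) = insert (i+1) (MOPT ∩ Finset.Icc 1 i) := by
        ext x
        simp only [Finset.mem_inter, Finset.mem_Icc, Finset.mem_insert]
        constructor
        · rintro ⟨hx, h1, h2⟩
          rcases Nat.lt_or_ge x (i+1) with h | h
          · exact Or.inr ⟨hx, h1, by omega⟩
          · left; omega
        · rintro (rfl | ⟨hx, h1, h2⟩)
          · exact ⟨hmem, by omega, le_rfl⟩
          · exact ⟨hx, h1, by omega⟩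
      have hnotmem : (i+1) ∉ MOPT ∩ Finset.Icc 1 i := by
        simp [Finset.mem_Icc]
      have hQ : (∑ j ∈ MOPT ∩ Finset.Icc 1 (i+1), (pr j : ℝ))
          = (pr (i+1) : ℝ) + ∑ j ∈ MOPT ∩ Finset.Icc 1 i, (pr j : ℝ) := by
        rw [hsplit, Finset.sum_insert hnotmem]
      have hS : (∑ j ∈ MOPT ∩ Finset.Icc 1 (i+1), s j)
          = s (i+1) + ∑ j ∈ MOPT ∩ Finset.Icc 1 i, s j := by
        rw [hsplit, Finset.sum_insert hnotmem]
      refine le_trans (min_le_right _ _) ?_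
      rw [hS]
      set k2 : ℤ := ⌈((p : ℝ) * granularity P pr (i+1) - (pr (i+1) : ℝ)) / granularity P pr i⌉
        with hk2def
      by_cases hk2 : 1 ≤ k2
      · rw [if_pos hk2]
        -- k2 ≤ ⌈Q'/d'⌉ - i
        have hceilQ' : (∑ j ∈ MOPT ∩ Finset.Icc 1 i, (pr j : ℝ))
            ≤ (⌈(∑ j ∈ MOPT ∩ Finset.Icc 1 i, (pr j : ℝ)) / granularity P pr i⌉ : ℝ)
              * granularity P pr i := by
          have h1 := Int.le_ceil ((∑ j ∈ MOPT ∩ Finset.Icc 1 i, (pr j : ℝ)) / granularity P pr i)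
          have := (div_le_iff₀ (hdpos i)).mp h1
          linarith
        have hk2le : k2 ≤ ⌈(∑ j ∈ MOPT ∩ Finset.Icc 1 i, (pr j : ℝ)) / granularity P pr i⌉
            - (i : ℤ) := by
          apply hL2.2
          simp only [Set.mem_setOf_eq, Nat.add_sub_cancel]
          push_cast
          have hmono := hdmono i
          have hdp := hdpos i
          nlinarith [hkey, hQ, hceilQ']
        have hi1 : 1 ≤ i := by
          rcases Nat.eq_zero_or_pos i with rfl | h
          · exfalso
            have hempty : MOPT ∩ Finset.Icc 1 0 = ∅ := by simp
            rw [hempty] at hk2le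
            simp at hk2le
            omega
          · exact h
        have hiIcc : i ∈ Finset.Icc 1 n := Finset.mem_Icc.mpr ⟨hi1, by omega⟩
        have hk2nat : 1 ≤ k2.toNat := by omega
        have hk2cast : ((k2.toNat : ℕ) : ℤ) = k2 := Int.toNat_of_nonneg (by omega)
        have := ih hiIcc k2.toNat hk2nat (by rw [hk2cast]; exact hk2le)
        linarith
      · rw [if_neg hk2]
        have := hspos i
        linarith
    · -- item i+1 is not in the optimal solution: use the first branch
      have hsplit : MOPT ∩ Finset.Icc 1 (i+1) = MOPT ∩ Finset.Icc 1 i := by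
        ext x
        simp only [Finset.mem_inter, Finset.mem_Icc]
        constructor
        · rintro ⟨hx, h1, h2⟩
          refine ⟨hx, h1, ?_⟩
          rcases Nat.lt_or_ge x (i+1) with h | h
          · omega
          · exfalso; have : x = i + 1 := by omega
            subst this; exact hmem hx
        · rintro ⟨hx, h1, h2⟩
          exact ⟨hx, h1, by omega⟩
      refine le_trans (min_le_left _ _) ?_
      set k1 : ℤ := ⌈((p : ℝ) * granularity P pr (i+1)) / granularity P pr i⌉ with hk1def
      have hk1pos : 1 ≤ k1 := by
        have : (0 : ℝ) < ((p : ℝ) * granularity P pr (i+1)) / granularity P pr i := by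
          apply div_pos
          · have : (1 : ℝ) ≤ (p : ℝ) := by exact_mod_cast hp1
            nlinarith [hdpos (i+1)]
          · exact hdpos i
        have := Int.ceil_pos.mpr this
        omega
      have hceilQ' : (∑ j ∈ MOPT ∩ Finset.Icc 1 i, (pr j : ℝ))
          ≤ (⌈(∑ j ∈ MOPT ∩ Finset.Icc 1 i, (pr j : ℝ)) / granularity P pr i⌉ : ℝ)
            * granularity P pr i := by
        have h1 := Int.le_ceil ((∑ j ∈ MOPT ∩ Finset.Icc 1 i, (pr j : ℝ)) / granularity P pr i)
        have := (div_le_iff₀ (hdpos i)).mp h1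
        linarith
      have hk1le : k1 ≤ ⌈(∑ j ∈ MOPT ∩ Finset.Icc 1 i, (pr j : ℝ)) / granularity P pr i⌉
          - (i : ℤ) := by
        apply hL1.2
        simp only [Set.mem_setOf_eq, Nat.add_sub_cancel]
        push_cast
        have hmono := hdmono i
        have hdp := hdpos i
        rw [hsplit] at hkey
        nlinarith [hkey, hceilQ']
      have hi1 : 1 ≤ i := by
        rcases Nat.eq_zero_or_pos i with rfl | h
        · exfalso
          have hempty : MOPT ∩ Finset.Icc 1 0 = ∅ := by simp
          rw [hempty] at hk1le
          simp at hk1le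
          omega
        · exact h
      have hceilP : ⌈(∑ j ∈ MOPT ∩ Finset.Icc 1 i, (pr j : ℝ)) / granularity P pr i⌉
          ≤ (P : ℤ) := by
        apply Int.ceil_le.mpr
        rw [div_le_iff₀ (hdpos i)]
        push_cast
        exact hsum_le i
      have hk1P : k1 ≤ (P : ℤ) := by omega
      rw [if_pos hk1P]
      have hiIcc : i ∈ Finset.Icc 1 n := Finset.mem_Icc.mpr ⟨hi1, by omega⟩
      have hk1nat : 1 ≤ k1.toNat := by omega
      have hk1cast : ((k1.toNat : ℕ) : ℤ) = k1 := Int.toNat_of_nonneg (by omega)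
      have := ih hiIcc k1.toNat hk1nat (by rw [hk1cast]; exact hk1le)
      rw [hsplit]
      exact this
end

section
/- Let V be a finite vertex set with distances c : V × V → ℝ and a fixed start vertex s ∈ V. For T ⊆ V \ {s} nonempty and v ∈ T, let f(T,v) be the minimum length of a path starting at s, ending at v, and visiting exactly the vertices T ∪ {s}, each exactly once. Then for |T| ≥ 2: f(T,v) = min over u ∈ T \ {v} of ( f(T \ {v}, u) + c(u,v) ), and f({v},v) = c(s,v). Moreover, the length of the shortest Hamiltonian cycle through all of V equals min over u ∈ V \ {s} of ( f(V \ {s}, u) + c(u,s) ) when |V| ≥ 2. -/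
/-- The total length of a walk given as a list of successively visited vertices. -/
def walkCost {V : Type*} (c : V → V → ℝ) : List V → ℝ
  | [] => 0
  | [_] => 0
  | a :: b :: t => c a b + walkCost c (b :: t)

lemma walkCost_concat {V : Type*} (c : V → V → ℝ) (w : List V) (u v : V)
    (h : w.getLast? = some u) : walkCost c (w ++ [v]) = walkCost c w + c u v := by
  induction w with
  | nil => simp at h
  | cons a t ih =>
    cases t with
    | nil =>
      simp only [List.getLast?_singleton, Option.some.injEq] at h
      subst h
      simp [walkCost]
    | cons b t' =>
      have h' : (b :: t').getLast? = some u := by rwa [List.getLast?_cons_cons] at h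
      have key : walkCost c ((a :: b :: t') ++ [v]) = c a b + walkCost c ((b :: t') ++ [v]) := rfl
      rw [key, ih h', show walkCost c (a :: b :: t') = c a b + walkCost c (b :: t') from rfl]
      ring

lemma last_ne_head {V : Type*} {w : List V} {s u : V} (hn : w.Nodup)
    (hh : w.head? = some s) (hl : w.getLast? = some u) (hlen : 2 ≤ w.length) : u ≠ s := by
  cases w with
  | nil => simp at hh
  | cons a t =>
    simp only [List.head?_cons, Option.some.injEq] at hh
    subst hh
    cases t with
    | nil => simp at hlen
    | cons b t' =>
      rw [List.getLast?_cons_cons] at hl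
      have hu : u ∈ b :: t' := by
        have := List.getLast?_eq_some_iff.mp hl
        obtain ⟨ys, hys⟩ := this
        rw [hys]; simp
      intro h
      subst h
      exact (List.nodup_cons.mp hn).1 hu

lemma head?_append_left {V : Type*} {w : List V} {s : V} (hh : w.head? = some s)
    (l : List V) : (w ++ l).head? = some s := by
  cases w with
  | nil => simp at hh
  | cons a t => simpa using hh

theorem held_karp_recursion {V : Type*} [Fintype V] [DecidableEq V]
    (c : V → V → ℝ) (s : V) (f : Finset V → V → ℝ)
    (hf : ∀ (T : Finset V) (v : V), v ∈ T → s ∉ T →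
      IsLeast {x : ℝ | ∃ w : List V, w.Nodup ∧ w.head? = some s ∧ w.getLast? = some v ∧
        w.toFinset = insert s T ∧ x = walkCost c w} (f T v)) :
    (∀ (T : Finset V) (v : V), s ∉ T → v ∈ T → 2 ≤ T.card →
      f T v = sInf {x : ℝ | ∃ u ∈ T.erase v, x = f (T.erase v) u + c u v}) ∧
    (∀ v : V, v ≠ s → f {v} v = c s v) ∧
    (2 ≤ Fintype.card V →
      ∀ tsp : ℝ,
        IsLeast {x : ℝ | ∃ w : List V, w.Nodup ∧ w.toFinset = Finset.univ ∧
          w.head? = some s ∧ x = walkCost c (w ++ [s])} tsp →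
        tsp = sInf {x : ℝ | ∃ u ∈ Finset.univ.erase s,
          x = f (Finset.univ.erase s) u + c u s}) := by
  refine ⟨?_, ?_, ?_⟩
  · -- main recursion
    intro T v hsT hvT hcard
    have hvs : v ≠ s := fun h => hsT (h ▸ hvT)
    have hfv := hf T v hvT hsT
    set R : Set ℝ := {x : ℝ | ∃ u ∈ T.erase v, x = f (T.erase v) u + c u v} with hR
    -- lower bound : f T v ≤ every element of R
    have hlb : ∀ x ∈ R, f T v ≤ x := by
      rintro x ⟨u, huv, rfl⟩
      have husT : s ∉ T.erase v := fun h => hsT (Finset.mem_of_mem_erase h)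
      have hfu := hf (T.erase v) u huv husT
      obtain ⟨w, hwn, hwh, hwl, hwt, hwc⟩ := hfu.1
      have hvnw : v ∉ w := by
        intro h
        have : v ∈ insert s (T.erase v) := hwt ▸ List.mem_toFinset.mpr h
        simp only [Finset.mem_insert, Finset.mem_erase] at this
        rcases this with h1 | h1
        · exact hvs h1
        · exact h1.1 rfl
      refine hfv.2 ⟨w ++ [v], ?_, head?_append_left hwh _, List.getLast?_concat, ?_, ?_⟩
      · simp [List.nodup_append, hwn, hvnw]
        exact fun a ha h => hvnw (h ▸ ha)
      · rw [List.toFinset_append, hwt]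
        simp only [List.toFinset_cons, List.toFinset_nil, insert_empty_eq]
        rw [Finset.union_comm, ← Finset.insert_eq, Finset.insert_comm,
          Finset.insert_erase hvT]
      · rw [walkCost_concat c w u v hwl, hwc]
    -- the optimum is attained: some element of R is ≤ f T v
    have hub : ∃ x ∈ R, x ≤ f T v := by
      obtain ⟨w, hwn, hwh, hwl, hwt, hwc⟩ := hfv.1
      obtain ⟨w', rfl⟩ := List.getLast?_eq_some_iff.mp hwl
      have hw'n : w'.Nodup := (List.nodup_append'.mp hwn).1
      have hvnw' : v ∉ w' := by
        have := (List.nodup_append'.mp hwn).2.2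
        intro h; exact this h (by simp)
      have hlen : 2 ≤ w'.length := by
        have hcard2 : (insert s T).card = T.card + 1 := Finset.card_insert_of_notMem hsT
        have h1 : (w' ++ [v]).toFinset.card = (w' ++ [v]).length :=
          List.toFinset_card_of_nodup hwn
        rw [hwt, hcard2, List.length_append] at h1
        simp only [List.length_singleton] at h1
        omega
      have hw'ne : w' ≠ [] := by
        intro h; rw [h] at hlen; simp at hlen
      have hw'h : w'.head? = some s := by
        cases w' with
        | nil => exact absurd rfl hw'ne
        | cons a t => simpa using hwh
      set u := w'.getLast hw'ne with hu
      have hw'l : w'.getLast? = some u := List.getLast?_eq_getLast hw'ne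
      have huw' : u ∈ w' := List.getLast_mem hw'ne
      have hus : u ≠ s := last_ne_head hw'n hw'h hw'l hlen
      have huv : u ≠ v := fun h => hvnw' (h ▸ huw')
      have hw't : w'.toFinset = insert s (T.erase v) := by
        have h1 : (w' ++ [v]).toFinset = insert v w'.toFinset := by
          rw [List.toFinset_append]
          simp only [List.toFinset_cons, List.toFinset_nil, insert_empty_eq]
          rw [Finset.union_comm, ← Finset.insert_eq]
        have h2 : insert v w'.toFinset = insert s T := by rw [← h1, hwt]
        have h3 : w'.toFinset = (insert v w'.toFinset).erase v :=
          (Finset.erase_insert (by simpa using hvnw')).symm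
        rw [h3, h2, Finset.erase_insert_of_ne (Ne.symm hvs)]
      have huT : u ∈ T.erase v := by
        have : u ∈ insert s (T.erase v) := hw't ▸ List.mem_toFinset.mpr huw'
        simp only [Finset.mem_insert] at this
        rcases this with h1 | h1
        · exact absurd h1 hus
        · exact h1
      have husT : s ∉ T.erase v := fun h => hsT (Finset.mem_of_mem_erase h)
      have hle : f (T.erase v) u ≤ walkCost c w' :=
        (hf (T.erase v) u huT husT).2 ⟨w', hw'n, hw'h, hw'l, hw't, rfl⟩
      refine ⟨f (T.erase v) u + c u v, ⟨u, huT, rfl⟩, ?_⟩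
      rw [hwc, walkCost_concat c w' u v hw'l]
      linarith
    obtain ⟨x, hxR, hxle⟩ := hub
    have hbdd : BddBelow R := ⟨f T v, fun y hy => hlb y hy⟩
    refine le_antisymm (le_csInf ⟨x, hxR⟩ hlb) (le_trans (csInf_le hbdd hxR) hxle)
  · -- base case
    intro v hv
    have hsv : s ∉ ({v} : Finset V) := by simp [Ne.symm hv]
    have h1 := hf {v} v (Finset.mem_singleton_self v) hsv
    refine le_antisymm (h1.2 ⟨[s, v], ?_, rfl, rfl, ?_, by simp [walkCost]⟩) ?_
    · simp [Ne.symm hv]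
    · simp
    · obtain ⟨w, hwn, hwh, hwl, hwt, hwc⟩ := h1.1
      have hlen : w.length = 2 := by
        have h2 : w.toFinset.card = w.length := List.toFinset_card_of_nodup hwn
        rw [hwt] at h2
        rw [← h2, Finset.card_insert_of_notMem hsv, Finset.card_singleton]
      obtain ⟨a, b, rfl⟩ := List.length_eq_two.mp hlen
      simp only [List.head?_cons, Option.some.injEq] at hwh
      have hb : b = v := by
        simpa using hwl
      subst hwh; subst hb
      rw [hwc]
      simp [walkCost]
  · -- TSP
    intro hcard tsp htsp
    set R : Set ℝ := {x : ℝ | ∃ u ∈ Finset.univ.erase s,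
        x = f (Finset.univ.erase s) u + c u s} with hR
    have hsE : s ∉ (Finset.univ.erase s : Finset V) := Finset.notMem_erase s _
    have hins : insert s ((Finset.univ.erase s : Finset V)) = Finset.univ :=
      Finset.insert_erase (Finset.mem_univ s)
    have hlb : ∀ x ∈ R, tsp ≤ x := by
      rintro x ⟨u, hu, rfl⟩
      have hfu := hf (Finset.univ.erase s) u hu hsE
      obtain ⟨w, hwn, hwh, hwl, hwt, hwc⟩ := hfu.1
      refine htsp.2 ⟨w, hwn, by rw [hwt, hins], hwh, ?_⟩
      rw [walkCost_concat c w u s hwl, hwc]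
    have hub : ∃ x ∈ R, x ≤ tsp := by
      obtain ⟨w, hwn, hwt, hwh, hwc⟩ := htsp.1
      have hwne : w ≠ [] := by
        intro h; rw [h] at hwh; simp at hwh
      have hlen : 2 ≤ w.length := by
        have h2 : w.toFinset.card = w.length := List.toFinset_card_of_nodup hwn
        rw [hwt, Finset.card_univ] at h2
        omega
      set u := w.getLast hwne with hu
      have hwl : w.getLast? = some u := List.getLast?_eq_getLast hwne
      have hus : u ≠ s := last_ne_head hwn hwh hwl hlen
      have huE : u ∈ Finset.univ.erase s := Finset.mem_erase.mpr ⟨hus, Finset.mem_univ u⟩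
      have hle : f (Finset.univ.erase s) u ≤ walkCost c w :=
        (hf (Finset.univ.erase s) u huE hsE).2 ⟨w, hwn, hwh, hwl, by rw [hwt, hins], rfl⟩
      refine ⟨f (Finset.univ.erase s) u + c u s, ⟨u, huE, rfl⟩, ?_⟩
      rw [hwc, walkCost_concat c w u s hwl]
      linarith
    obtain ⟨x, hxR, hxle⟩ := hub
    have hbdd : BddBelow R := ⟨tsp, fun y hy => hlb y hy⟩
    exact le_antisymm (le_csInf ⟨x, hxR⟩ hlb) (le_trans (csInf_le hbdd hxR) hxle)
end
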